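/- Let A be a real 3×3 symmetric matrix with trace zero. Then 18·det A ≥ −√6 · ( Σ_{i,j} A_{ij}² )^{3/2}; equivalently, for every real number R, R·‖A‖² + 18 det A ≥ (R − √6 ‖A‖)·‖A‖², where ‖A‖ is the Frobenius norm. -/

import Mathlib

/-- for a real symmetric traceless 3×3 matrix,
`18 det A ≥ -√6 ‖A‖³` (Frobenius norm); equivalently, for every real `R`,
`R ‖A‖² + 18 det A ≥ (R - √6 ‖A‖) ‖A‖²`. -/
theorem det_lower_bound (A : Matrix (Fin 3) (Fin 3) ℝ)
    (hsymm : A.IsSymm) (htrace : A.trace = 0) :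
    18 * A.det ≥ -Real.sqrt 6 * (∑ i, ∑ j, A i j ^ 2) ^ ((3 : ℝ) / 2) ∧
      ∀ R : ℝ,
        R * (∑ i, ∑ j, A i j ^ 2) + 18 * A.det ≥
          (R - Real.sqrt 6 * Real.sqrt (∑ i, ∑ j, A i j ^ 2)) *
            (∑ i, ∑ j, A i j ^ 2) := by
  have hA : A.IsHermitian := by
    simpa [Matrix.IsHermitian, Matrix.conjTranspose_eq_transpose_of_trivial] using hsymm.eq
  set U : Matrix (Fin 3) (Fin 3) ℝ := (hA.eigenvectorUnitary : Matrix (Fin 3) (Fin 3) ℝ) with hUdef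
  set D : Matrix (Fin 3) (Fin 3) ℝ := Matrix.diagonal (RCLike.ofReal ∘ hA.eigenvalues) with hD
  have hU : star U * U = 1 := (Matrix.mem_unitaryGroup_iff').mp hA.eigenvectorUnitary.2
  have hspec : A = U * D * star U := hA.spectral_theorem
  have htr : A.trace = ∑ i, hA.eigenvalues i := by
    conv_lhs => rw [hspec]
    rw [Matrix.trace_mul_cycle, hU, Matrix.one_mul, hD, Matrix.trace_diagonal]
    simp
  have htr2 : (A * A).trace = ∑ i, hA.eigenvalues i ^ 2 := by
    have hAA : A * A = U * (D * D) * star U := by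
      rw [hspec]
      calc U * D * star U * (U * D * star U) = U * (D * (star U * U) * D) * star U := by
            noncomm_ring
        _ = U * (D * D) * star U := by rw [hU]; noncomm_ring
    rw [hAA, Matrix.trace_mul_cycle, hU, Matrix.one_mul, hD,
      Matrix.diagonal_mul_diagonal, Matrix.trace_diagonal]
    simp [sq]
  have hSsum : ∑ i, ∑ j, A i j ^ 2 = (A * A).trace := by
    rw [Matrix.trace]
    simp only [Matrix.diag_apply, Matrix.mul_apply]
    refine Finset.sum_congr rfl fun i _ => Finset.sum_congr rfl fun j _ => ?_
    rw [sq, ← hsymm.apply j i]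
  have hdet : A.det = ∏ i, hA.eigenvalues i := by
    simpa using hA.det_eq_prod_eigenvalues
  set x := hA.eigenvalues 0
  set y := hA.eigenvalues 1
  set z := hA.eigenvalues 2
  set S := ∑ i, ∑ j, A i j ^ 2 with hSdef
  have hS : S = x ^ 2 + y ^ 2 + z ^ 2 := by
    rw [hSsum, htr2, Fin.sum_univ_three]
  have hsum0 : x + y + z = 0 := by
    rw [← Fin.sum_univ_three hA.eigenvalues, ← htr, htrace]
  have hdet' : A.det = x * y * z := by
    rw [hdet, Fin.prod_univ_three]
  -- nonnegativity of S
  have hS0 : 0 ≤ S := by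
    rw [hS]; positivity
  -- key polynomial inequality
  have hkey : 54 * A.det ^ 2 ≤ S ^ 3 := by
    have hz : z = -(x + y) := by linarith
    rw [hdet', hS, hz]
    nlinarith [sq_nonneg (x - y), sq_nonneg (x + y), sq_nonneg x, sq_nonneg y,
      sq_nonneg (x * y), sq_nonneg (x ^ 2 - y ^ 2), sq_nonneg (x ^ 2 + y ^ 2),
      sq_nonneg ((x - y) * (x + y)), sq_nonneg ((x + 2 * y) * (2 * x + y)),
      sq_nonneg (x * (x + 2 * y)), sq_nonneg (y * (2 * x + y))]
  set s := Real.sqrt S with hsdef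
  have hs0 : 0 ≤ s := Real.sqrt_nonneg S
  have hs2 : s ^ 2 = S := Real.sq_sqrt hS0
  have h6 : Real.sqrt 6 ^ 2 = 6 := Real.sq_sqrt (by norm_num)
  have h60 : 0 ≤ Real.sqrt 6 := Real.sqrt_nonneg 6
  have h32 : S ^ ((3 : ℝ) / 2) = s ^ 3 := by
    rw [show ((3 : ℝ) / 2) = (1 / 2 : ℝ) * 3 by norm_num, Real.rpow_mul hS0,
      ← Real.sqrt_eq_rpow, ← hsdef]
    exact_mod_cast Real.rpow_natCast s 3
  have hkey' : 54 * A.det ^ 2 ≤ (s ^ 3) ^ 2 := by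
    have : (s ^ 3) ^ 2 = S ^ 3 := by rw [← hs2]; ring
    linarith [hkey, this.ge]
  have hmain : -Real.sqrt 6 * s ^ 3 ≤ 18 * A.det := by
    have ht0 : 0 ≤ Real.sqrt 6 * s ^ 3 := by positivity
    nlinarith [sq_nonneg (18 * A.det + Real.sqrt 6 * s ^ 3),
      sq_nonneg (18 * A.det - Real.sqrt 6 * s ^ 3), ht0, hkey', h6]
  constructor
  · rw [ge_iff_le, h32]
    exact hmain
  · intro R
    have hid : (R - Real.sqrt 6 * s) * S = R * S - Real.sqrt 6 * s ^ 3 := by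
      rw [← hs2]; ring
    rw [ge_iff_le, hid]
    linarith [hmain]
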